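/- Let H be the 5-dimensional complex Heisenberg Lie algebra with basis r₋₂, r₋₁, r₀, r₁, r₂ and brackets [r₋₁, r₁] = r₀, [r₂, r₋₂] = r₀, and [r_i, r_j] = 0 whenever i + j ≠ 0, and let w = H ⊕ sl₂(ℂ[X]) be the direct sum of Lie algebras, where sl₂(ℂ[X]) is the Lie algebra of 2×2 trace-zero matrices over ℂ[X] with y = E₁₂, z = E₂₁, h = E₁₁ − E₂₂. Set X₁ = r₁ − (1/2)y + (1/2)X·z, X₂ = r₋₁ + z, X₃ = r₋₂, and A(u) = X₁ + (u/3)·X₂ + (u²/6)·X₃ for u ∈ ℂ. Then the Lie subalgebra of w generated by all differences A(u) − A(u') (u, u' ∈ ℂ) equals span_ℂ{X₂, X₃}, and this subalgebra is abelian. -/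

import Mathlib

open Polynomial Matrix

attribute [local instance 100] LieRing.ofAssociativeRing

/-- Ambient associative algebra containing the Wahlquist–Estabrook algebra
`w = H ⊕ sl₂(ℂ[X])` of KdV: the 5-dimensional Heisenberg algebra `H` is
realized inside `4×4` strictly upper-triangular complex matrices
(`r₋₁ = E₁₂, r₁ = E₂₄, r₂ = E₁₃, r₋₂ = E₃₄, r₀ = E₁₄`, so that
`[r₋₁,r₁] = [r₂,r₋₂] = r₀` and all other brackets of basis elements vanish),
and `sl₂(ℂ[X])` inside `2×2` matrices over `ℂ[X]`; the two factors of the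
product commute, and the bracket is the componentwise commutator. -/
abbrev WEAmb := Matrix (Fin 4) (Fin 4) ℂ × Matrix (Fin 2) (Fin 2) ℂ[X]

noncomputable def rHeis : ℤ → WEAmb
  | -1 => (Matrix.single 0 1 1, 0)
  | 1 => (Matrix.single 1 3 1, 0)
  | 2 => (Matrix.single 0 2 1, 0)
  | -2 => (Matrix.single 2 3 1, 0)
  | 0 => (Matrix.single 0 3 1, 0)
  | _ => 0

noncomputable def yE : WEAmb := (0, Matrix.single 0 1 1)
noncomputable def zE : WEAmb := (0, Matrix.single 1 0 1)
noncomputable def hE : WEAmb :=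
  (0, Matrix.single 0 0 1 - Matrix.single 1 1 1)
/-- `X·z`, the element `λ z` of `sl₂(ℂ[X])`. -/
noncomputable def zXE : WEAmb := (0, (X : ℂ[X]) • Matrix.single 1 0 1)

/-- `X₁ = r₁ − (1/2)y + (1/2)X·z`. -/
noncomputable def X₁E : WEAmb := rHeis 1 - (2⁻¹ : ℂ) • yE + (2⁻¹ : ℂ) • zXE
/-- `X₂ = r₋₁ + z`. -/
noncomputable def X₂E : WEAmb := rHeis (-1) + zE
/-- `X₃ = r₋₂`. -/
noncomputable def X₃E : WEAmb := rHeis (-2)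

/-- `A(u) = X₁ + (u/3)X₂ + (u²/6)X₃`, the `x`-part of the universal
zero-curvature representation of KdV. -/
noncomputable def AKdV (u : ℂ) : WEAmb := X₁E + (u / 3) • X₂E + (u ^ 2 / 6) • X₃E


lemma lie23 : ⁅X₂E, X₃E⁆ = 0 := by
  have h : (⁅X₂E, X₃E⁆ : WEAmb) = (⁅X₂E.1, X₃E.1⁆, ⁅X₂E.2, X₃E.2⁆) := rfl
  rw [h]
  simp only [X₂E, X₃E, rHeis, zE, Prod.mk_add_mk, add_zero, zero_add, Ring.lie_def]
  refine Prod.ext ?_ ?_ <;>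
    simp [Matrix.single_mul_single_of_ne, Prod.fst, Prod.snd]

lemma lie32 : ⁅X₃E, X₂E⁆ = 0 := by
  rw [← lie_skew, lie23, neg_zero]

lemma spanLie {a b : WEAmb} (ha : a ∈ Submodule.span ℂ {X₂E, X₃E})
    (hb : b ∈ Submodule.span ℂ {X₂E, X₃E}) : ⁅a, b⁆ = 0 := by
  rw [Submodule.mem_span_pair] at ha hb
  obtain ⟨s, t, rfl⟩ := ha
  obtain ⟨s', t', rfl⟩ := hb
  simp only [lie_add, add_lie, lie_smul, smul_lie, lie23, lie32, lie_self, smul_zero, add_zero]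

noncomputable def SLie : LieSubalgebra ℂ WEAmb :=
  { Submodule.span ℂ {X₂E, X₃E} with
    lie_mem' := fun {x y} hx hy => by
      have h : ⁅x, y⁆ = 0 := spanLie hx hy
      rw [h]; exact zero_mem (Submodule.span ℂ {X₂E, X₃E}) }

lemma Adiff (u u' : ℂ) :
    AKdV u - AKdV u' = ((u - u') / 3) • X₂E + ((u ^ 2 - u' ^ 2) / 6) • X₃E := by
  simp only [AKdV]
  module

/-- The subalgebra `we¹` of the Wahlquist–Estabrook algebra of KdV generated by
all differences `A(u) − A(u')` equals `span_ℂ{X₂, X₃}`, and it is abelian. -/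
theorem stmt12 :
    (LieSubalgebra.lieSpan ℂ WEAmb
        {a | ∃ u u' : ℂ, a = AKdV u - AKdV u'}).toSubmodule
      = Submodule.span ℂ {X₂E, X₃E}
    ∧ ∀ a ∈ LieSubalgebra.lieSpan ℂ WEAmb
        {a | ∃ u u' : ℂ, a = AKdV u - AKdV u'},
      ∀ b ∈ LieSubalgebra.lieSpan ℂ WEAmb
        {a | ∃ u u' : ℂ, a = AKdV u - AKdV u'}, ⁅a, b⁆ = 0 := by
  set G : Set WEAmb := {a | ∃ u u' : ℂ, a = AKdV u - AKdV u'} with hG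
  have hGsub : G ⊆ (SLie : Set WEAmb) := by
    rintro a ⟨u, u', rfl⟩
    rw [Adiff]
    exact Submodule.add_mem _
      (Submodule.smul_mem _ _ (Submodule.subset_span (Set.mem_insert _ _)))
      (Submodule.smul_mem _ _ (Submodule.subset_span (Set.mem_insert_of_mem _ rfl)))
  have hle : LieSubalgebra.lieSpan ℂ WEAmb G ≤ SLie :=
    LieSubalgebra.lieSpan_le.mpr hGsub
  have h30 : AKdV 3 - AKdV 0 ∈ LieSubalgebra.lieSpan ℂ WEAmb G :=
    LieSubalgebra.subset_lieSpan ⟨3, 0, rfl⟩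
  have hm30 : AKdV (-3) - AKdV 0 ∈ LieSubalgebra.lieSpan ℂ WEAmb G :=
    LieSubalgebra.subset_lieSpan ⟨-3, 0, rfl⟩
  have hX2 : X₂E ∈ LieSubalgebra.lieSpan ℂ WEAmb G := by
    have key : X₂E = (2⁻¹ : ℂ) • (AKdV 3 - AKdV 0) - (2⁻¹ : ℂ) • (AKdV (-3) - AKdV 0) := by
      rw [Adiff, Adiff]
      norm_num
      module
    rw [key]
    exact sub_mem ((LieSubalgebra.lieSpan ℂ WEAmb G).smul_mem _ h30) ((LieSubalgebra.lieSpan ℂ WEAmb G).smul_mem _ hm30)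
  have hX3 : X₃E ∈ LieSubalgebra.lieSpan ℂ WEAmb G := by
    have key : X₃E = (3⁻¹ : ℂ) • (AKdV 3 - AKdV 0) + (3⁻¹ : ℂ) • (AKdV (-3) - AKdV 0) := by
      rw [Adiff, Adiff]
      norm_num
      module
    rw [key]
    exact add_mem ((LieSubalgebra.lieSpan ℂ WEAmb G).smul_mem _ h30) ((LieSubalgebra.lieSpan ℂ WEAmb G).smul_mem _ hm30)
  have hge : Submodule.span ℂ {X₂E, X₃E} ≤
      (LieSubalgebra.lieSpan ℂ WEAmb G).toSubmodule := by
    rw [Submodule.span_le]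
    rintro a (rfl | rfl)
    · exact hX2
    · exact hX3
  constructor
  · exact le_antisymm hle hge
  · intro a ha b hb
    exact spanLie (hle ha) (hle hb)
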